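/- Let X have density p with E|X| < ∞, and let h satisfy E|h(X)| < ∞. Define (τ_P ∘ h)(x) = p(x)^{-1} ∫_{-∞}^x (E[h(X)] - h(y)) p(y) dy. Then for any differentiable function φ with E[|(τ_P ∘ h)(X) φ'(X)|] < ∞, one has E[(τ_P ∘ h)(X) φ'(X)] = E[(h(X) - E[h(X)]) φ(X)]. -/

import Mathlib

open MeasureTheory Set Filter Topology

section Helpers

variable {f : ℝ → ℝ}

lemma tendsto_setIntegral_Iic_atTop (hf : Integrable f) :
    Tendsto (fun x : ℝ => ∫ y in Iic x, f y) atTop (𝓝 (∫ y, f y)) := by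
  have h : AECover (volume : Measure ℝ) atTop (fun x : ℝ => Iic x) := aecover_Iic tendsto_id
  exact h.integral_tendsto_of_countably_generated hf

lemma tendsto_setIntegral_Ioi_atBot (hf : Integrable f) :
    Tendsto (fun x : ℝ => ∫ y in Ioi x, f y) atBot (𝓝 (∫ y, f y)) := by
  have h : AECover (volume : Measure ℝ) atBot (fun x : ℝ => Ioi x) := aecover_Ioi tendsto_id
  exact h.integral_tendsto_of_countably_generated hf

lemma tendsto_setIntegral_Iic_atBot (hf : Integrable f) :
    Tendsto (fun x : ℝ => ∫ y in Iic x, f y) atBot (𝓝 0) := by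
  have h : (fun x : ℝ => ∫ y in Iic x, f y)
      = fun x : ℝ => (∫ y, f y) - ∫ y in Ioi x, f y := by
    funext x
    have := intervalIntegral.integral_Iic_add_Ioi (b := x)
      hf.integrableOn hf.integrableOn
    linarith
  rw [h]
  simpa using (tendsto_const_nhds (x := ∫ y, f y)).sub (tendsto_setIntegral_Ioi_atBot hf)

lemma tendsto_setIntegral_Ioi_atTop (hf : Integrable f) :
    Tendsto (fun x : ℝ => ∫ y in Ioi x, f y) atTop (𝓝 0) := by
  have h : (fun x : ℝ => ∫ y in Ioi x, f y)
      = fun x : ℝ => (∫ y, f y) - ∫ y in Iic x, f y := by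
    funext x
    have := intervalIntegral.integral_Iic_add_Ioi (b := x)
      hf.integrableOn hf.integrableOn
    linarith
  rw [h]
  simpa using (tendsto_const_nhds (x := ∫ y, f y)).sub (tendsto_setIntegral_Iic_atTop hf)

end Helpers

/-- Integration by parts for two indefinite integrals on an interval, via Fubini. -/
lemma parts_on_Ioc {q f G Φ : ℝ → ℝ} {c d : ℝ} (hcd : c ≤ d)
    (hq : IntegrableOn q (Ioc c d)) (hf : IntegrableOn f (Ioc c d))
    (hGf : IntegrableOn (fun t => G t * f t) (Ioc c d))
    (hqΦ : IntegrableOn (fun t => q t * Φ t) (Ioc c d))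
    (hG : ∀ t ∈ Icc c d, G t = G c + ∫ x in Ioc c t, q x)
    (hΦ : ∀ t ∈ Icc c d, Φ t = Φ c + ∫ x in Ioc c t, f x) :
    ∫ t in Ioc c d, (G t * f t + q t * Φ t) = G d * Φ d - G c * Φ c := by
  set ν : Measure ℝ := volume.restrict (Ioc c d) with hν
  have hprod : Integrable (fun z : ℝ × ℝ => f z.1 * q z.2) (ν.prod ν) :=
    Integrable.mul_prod hf hq
  set s : Set (ℝ × ℝ) := {z : ℝ × ℝ | z.2 ≤ z.1} with hs_def
  have hs : MeasurableSet s := measurableSet_le measurable_snd measurable_fst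
  -- the split identity
  have hsplit : (∫ z in s, f z.1 * q z.2 ∂ν.prod ν) + (∫ z in sᶜ, f z.1 * q z.2 ∂ν.prod ν)
      = (∫ t in Ioc c d, f t) * ∫ t in Ioc c d, q t := by
    rw [integral_add_compl hs hprod]
    exact integral_prod_mul f q
  -- part A : over s
  have hA : (∫ z in s, f z.1 * q z.2 ∂ν.prod ν)
      = ∫ t in Ioc c d, f t * (G t - G c) := by
    rw [← integral_indicator hs]
    rw [MeasureTheory.integral_prod _ (hprod.indicator hs)]
    rw [hν]
    refine setIntegral_congr_fun measurableSet_Ioc (fun t ht => ?_)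
    have h1 : (fun x => s.indicator (fun z : ℝ × ℝ => f z.1 * q z.2) (t, x))
        = (Iic t).indicator (fun x => f t * q x) := by
      funext x
      simp only [Set.indicator_apply, hs_def, Set.mem_setOf_eq, Set.mem_Iic]
    rw [h1, integral_indicator measurableSet_Iic]
    rw [Measure.restrict_restrict measurableSet_Iic]
    have h2 : Iic t ∩ Ioc c d = Ioc c t := by
      ext y
      simp only [mem_inter_iff, mem_Iic, mem_Ioc]
      exact ⟨fun ⟨h1', h2', _⟩ => ⟨h2', h1'⟩, fun ⟨h1', h2'⟩ => ⟨h2', h1', h2'.trans ht.2⟩⟩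
    rw [h2, MeasureTheory.integral_const_mul]
    have := hG t ⟨ht.1.le, ht.2⟩
    rw [show (∫ x in Ioc c t, q x) = G t - G c by linarith]
  -- part B : over sᶜ
  have hB : (∫ z in sᶜ, f z.1 * q z.2 ∂ν.prod ν)
      = ∫ x in Ioc c d, q x * (Φ x - Φ c) := by
    rw [← integral_indicator hs.compl]
    rw [MeasureTheory.integral_prod_symm _ (hprod.indicator hs.compl)]
    rw [hν]
    refine setIntegral_congr_fun measurableSet_Ioc (fun x hx => ?_)
    have h1 : (fun t => sᶜ.indicator (fun z : ℝ × ℝ => f z.1 * q z.2) (t, x))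
        = (Iio x).indicator (fun t => f t * q x) := by
      funext t
      simp only [Set.indicator_apply, hs_def, Set.mem_compl_iff, Set.mem_setOf_eq, Set.mem_Iio,
        not_le]
    rw [h1, integral_indicator measurableSet_Iio]
    rw [Measure.restrict_restrict measurableSet_Iio]
    have h2 : Iio x ∩ Ioc c d = Ioo c x := by
      ext y
      simp only [mem_inter_iff, mem_Iio, mem_Ioc, mem_Ioo]
      exact ⟨fun ⟨h1', h2', _⟩ => ⟨h2', h1'⟩, fun ⟨h1', h2'⟩ => ⟨h2', h1', h2'.le.trans hx.2⟩⟩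
    rw [h2, MeasureTheory.integral_mul_const, ← MeasureTheory.integral_Ioc_eq_integral_Ioo]
    have := hΦ x ⟨hx.1.le, hx.2⟩
    rw [show (∫ t in Ioc c x, f t) = Φ x - Φ c by linarith]
    ring
  -- expand the two sides
  have e1 : ∫ t in Ioc c d, f t * (G t - G c)
      = (∫ t in Ioc c d, G t * f t) - G c * ∫ t in Ioc c d, f t := by
    have : (fun t => f t * (G t - G c)) = fun t => G t * f t - G c * f t := by
      funext t; ring
    rw [this, integral_sub hGf (hf.const_mul (G c)), MeasureTheory.integral_const_mul]
  have e2 : ∫ x in Ioc c d, q x * (Φ x - Φ c)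
      = (∫ x in Ioc c d, q x * Φ x) - Φ c * ∫ x in Ioc c d, q x := by
    have : (fun x => q x * (Φ x - Φ c)) = fun x => q x * Φ x - Φ c * q x := by
      funext x; ring
    rw [this, integral_sub hqΦ (hq.const_mul (Φ c)), MeasureTheory.integral_const_mul]
  have hGd := hG d ⟨hcd, le_rfl⟩
  have hΦd := hΦ d ⟨hcd, le_rfl⟩
  rw [integral_add hGf hqΦ]
  have hq_int_eq : (∫ x in Ioc c d, q x) = G d - G c := by linarith
  have hf_int_eq : (∫ x in Ioc c d, f x) = Φ d - Φ c := by linarith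
  rw [hA, hB, e1, e2, hq_int_eq, hf_int_eq] at hsplit
  nlinarith [hsplit]

lemma limit_zero_atTop {w Φ G : ℝ → ℝ} (hw : Integrable w)
    (hwΦ : Integrable (fun x => w x * Φ x)) {A : ℝ}
    (hGne : ∀ x, A < x → G x ≠ 0)
    (hG : ∀ x, G x = ∫ y in Ioi x, w y) {L : ℝ}
    (hL : Tendsto (fun x => G x * Φ x) atTop (𝓝 L)) : L = 0 := by
  by_contra hL0
  have habs : (0:ℝ) < |L| := abs_pos.mpr hL0
  have hwint : Integrable (fun y : ℝ => |w y|) := hw.abs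
  set W : ℝ → ℝ := fun x => ∫ y in Ioi x, |w y| with hW_def
  have hWanti : Antitone W := by
    intro x y hxy
    exact setIntegral_mono_set hwint.integrableOn (ae_of_all _ fun z => abs_nonneg _)
      (HasSubset.Subset.eventuallyLE (Ioi_subset_Ioi hxy))
  have hGW : ∀ x, |G x| ≤ W x := by
    intro x
    rw [hG]
    calc |∫ y in Ioi x, w y| = ‖∫ y in Ioi x, w y‖ := (Real.norm_eq_abs _).symm
      _ ≤ ∫ y in Ioi x, ‖w y‖ := norm_integral_le_integral_norm _
      _ = W x := by simp [hW_def, Real.norm_eq_abs]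
  have hWpos : ∀ x, 0 < W x := by
    intro x
    have hx : A < max x A + 1 := by
      have := le_max_right x A; linarith
    have h1 : (0:ℝ) < |G (max x A + 1)| := abs_pos.mpr (hGne _ hx)
    have h3 : W (max x A + 1) ≤ W x := hWanti (by have := le_max_left x A; linarith)
    linarith [hGW (max x A + 1)]
  have hW0 : Tendsto W atTop (𝓝 0) := tendsto_setIntegral_Ioi_atTop hwint
  obtain ⟨M, hM⟩ : ∃ M : ℝ, ∀ x, M ≤ x → |L| / 2 ≤ |G x * Φ x| := by
    have h1 : Tendsto (fun x => |G x * Φ x|) atTop (𝓝 |L|) := hL.abs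
    have h2 : ∀ᶠ x in atTop, |L| / 2 ≤ |G x * Φ x| :=
      h1.eventually (eventually_ge_nhds (by linarith))
    obtain ⟨M, hM⟩ := eventually_atTop.mp h2
    exact ⟨M, hM⟩
  have hstep : ∀ a : ℝ, ∃ b : ℝ, a ≤ b ∧ W b ≤ W a / 2 := by
    intro a
    have h1 : ∀ᶠ x in atTop, W x ≤ W a / 2 :=
      hW0.eventually (eventually_le_nhds (by linarith [hWpos a]))
    obtain ⟨b, hb⟩ := (h1.and (eventually_ge_atTop a)).exists
    exact ⟨b, hb.2, hb.1⟩
  choose next hnext1 hnext2 using hstep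
  set x : ℕ → ℝ := fun n => Nat.rec (max M (A + 1)) (fun _ xn => next xn) n with hx_def
  have hx0 : x 0 = max M (A + 1) := rfl
  have hxs : ∀ n, x (n + 1) = next (x n) := fun n => rfl
  have hxmono : Monotone x := monotone_nat_of_le_succ (fun n => hnext1 (x n))
  have hxge : ∀ n, max M (A + 1) ≤ x n := fun n => hx0 ▸ hxmono (Nat.zero_le n)
  have hchunk : ∀ n, |L| / 4 ≤ ∫ y in Ioc (x n) (x (n + 1)), |w y * Φ y| := by
    intro n
    have hWn := hWpos (x n)
    have hpt : ∀ y ∈ Ioc (x n) (x (n + 1)), |L| / 2 / W (x n) * |w y| ≤ |w y * Φ y| := by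
      intro y hy
      have hyge : max M (A + 1) < y := lt_of_le_of_lt (hxge n) hy.1
      have hyA : A < y := by have := le_max_right M (A + 1); linarith
      have hyM : M ≤ y := le_of_lt (lt_of_le_of_lt (le_max_left M (A + 1)) hyge)
      have h1 : |L| / 2 ≤ |G y * Φ y| := hM y hyM
      have h2 : |G y| ≤ W (x n) := (hGW y).trans (hWanti hy.1.le)
      have h3 : (0:ℝ) < |G y| := abs_pos.mpr (hGne y hyA)
      rw [abs_mul] at h1 ⊢
      have hΦy : |L| / 2 / W (x n) ≤ |Φ y| := by
        rw [div_le_iff₀ hWn]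
        calc |L| / 2 ≤ |G y| * |Φ y| := h1
          _ ≤ W (x n) * |Φ y| := mul_le_mul_of_nonneg_right h2 (abs_nonneg _)
          _ = |Φ y| * W (x n) := mul_comm _ _
      calc |L| / 2 / W (x n) * |w y| ≤ |Φ y| * |w y| :=
            mul_le_mul_of_nonneg_right hΦy (abs_nonneg _)
        _ = |w y| * |Φ y| := mul_comm _ _
    have hint1 : IntegrableOn (fun y => |w y * Φ y|) (Ioc (x n) (x (n + 1))) :=
      hwΦ.abs.integrableOn
    have hint2 : IntegrableOn (fun y => |L| / 2 / W (x n) * |w y|) (Ioc (x n) (x (n + 1))) :=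
      (hwint.const_mul _).integrableOn
    have hmono := setIntegral_mono_on hint2 hint1 measurableSet_Ioc hpt
    have hsplitW : W (x n) = (∫ y in Ioc (x n) (x (n + 1)), |w y|) + W (x (n + 1)) := by
      rw [hW_def]
      rw [← setIntegral_union (Ioc_disjoint_Ioi le_rfl) measurableSet_Ioi
        hwint.integrableOn hwint.integrableOn,
        Set.Ioc_union_Ioi_eq_Ioi (hxmono (Nat.le_succ n))]
    have hW2 : W (x (n + 1)) ≤ W (x n) / 2 := by rw [hxs]; exact hnext2 (x n)
    have hIw : W (x n) / 2 ≤ ∫ y in Ioc (x n) (x (n + 1)), |w y| := by linarith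
    rw [MeasureTheory.integral_const_mul] at hmono
    have hc : (0:ℝ) ≤ |L| / 2 / W (x n) := by positivity
    calc |L| / 4 = |L| / 2 / W (x n) * (W (x n) / 2) := by field_simp; ring
      _ ≤ |L| / 2 / W (x n) * ∫ y in Ioc (x n) (x (n + 1)), |w y| :=
            mul_le_mul_of_nonneg_left hIw hc
      _ ≤ _ := hmono
  have hacc : ∀ n : ℕ, (n : ℝ) * (|L| / 4) ≤ ∫ y in Ioc (x 0) (x n), |w y * Φ y| := by
    intro n
    induction n with
    | zero => simp
    | succ n ih =>
      have hun : Ioc (x 0) (x n) ∪ Ioc (x n) (x (n + 1)) = Ioc (x 0) (x (n + 1)) :=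
        Set.Ioc_union_Ioc_eq_Ioc (hxmono (Nat.zero_le n)) (hxmono (Nat.le_succ n))
      have hdisj : Disjoint (Ioc (x 0) (x n)) (Ioc (x n) (x (n + 1))) :=
        Set.Ioc_disjoint_Ioc_of_le le_rfl
      have := setIntegral_union hdisj measurableSet_Ioc
        (hwΦ.abs.integrableOn (s := Ioc (x 0) (x n)))
        (hwΦ.abs.integrableOn (s := Ioc (x n) (x (n + 1))))
      rw [hun] at this
      rw [this]
      push_cast
      linarith [hchunk n]
  obtain ⟨n, hn⟩ := exists_nat_gt ((∫ y, |w y * Φ y|) / (|L| / 4))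
  have hb1 : ∫ y in Ioc (x 0) (x n), |w y * Φ y| ≤ ∫ y, |w y * Φ y| :=
    setIntegral_le_integral hwΦ.abs (ae_of_all _ fun y => abs_nonneg _)
  have hb2 := hacc n
  rw [div_lt_iff₀ (by positivity)] at hn
  linarith

lemma limit_zero_atBot {w Φ G : ℝ → ℝ} (hw : Integrable w)
    (hwΦ : Integrable (fun x => w x * Φ x)) {B : ℝ}
    (hGne : ∀ x, x < B → G x ≠ 0)
    (hG : ∀ x, G x = ∫ y in Iic x, w y) {L : ℝ}
    (hL : Tendsto (fun x => G x * Φ x) atBot (𝓝 L)) : L = 0 := by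
  have hmap : Measure.map (fun x : ℝ => -x) volume = volume := Measure.map_neg_eq_self volume
  have hw' : Integrable (fun x : ℝ => w (-x)) := by
    refine Integrable.comp_measurable ?_ measurable_neg
    rw [hmap]; exact hw
  have hwΦ' : Integrable (fun x : ℝ => w (-x) * Φ (-x)) := by
    have : Integrable ((fun x => w x * Φ x) ∘ fun x : ℝ => -x) := by
      refine Integrable.comp_measurable ?_ measurable_neg
      rw [hmap]; exact hwΦ
    exact this
  refine limit_zero_atTop (w := fun x => w (-x)) (Φ := fun x => Φ (-x)) (G := fun x => G (-x))
    hw' hwΦ' (A := -B) (fun x hx => hGne (-x) (by linarith)) (fun x => ?_) ?_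
  · show G (-x) = _
    rw [integral_comp_neg_Ioi, hG]
  · exact hL.comp tendsto_neg_atTop_atBot

lemma ae_eq_zero_on_zero_set {q g : ℝ → ℝ} (hq : Integrable q)
    (hg : ∀ x, g x = ∫ y in Iic x, q y) :
    ∀ᵐ x : ℝ, g x = 0 → q x = 0 := by
  set Z : Set ℝ := {x : ℝ | g x = 0} with hZ_def
  have hdens := Besicovitch.ae_tendsto_measure_inter_div (volume : Measure ℝ) Z
  have hdens' : ∀ᵐ x : ℝ, x ∈ Z →
      Tendsto (fun r => volume (Z ∩ Metric.closedBall x r) / volume (Metric.closedBall x r))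
        (𝓝[>] 0) (𝓝 1) := ae_imp_of_ae_restrict hdens
  have hleb := IsUnifLocDoublingMeasure.ae_tendsto_average_norm_sub
    (μ := volume) (hq.locallyIntegrable) 1
  filter_upwards [hdens', hleb] with z hz hzleb hgz
  have hzZ : z ∈ Z := hgz
  specialize hz hzZ
  have hzleb' : Tendsto (fun r : ℝ => ⨍ y in Metric.closedBall z r, ‖q y - q z‖) (𝓝[>] 0)
      (𝓝 0) := by
    refine hzleb (fun _ : ℝ => z) (fun r : ℝ => r) tendsto_id ?_
    filter_upwards [self_mem_nhdsWithin] with r hr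
    exact Metric.mem_closedBall_self (by simpa using le_of_lt hr)
  by_contra hqz
  have hqzpos : (0:ℝ) < |q z| := abs_pos.mpr hqz
  have h1 : ∀ᶠ r in 𝓝[>] (0:ℝ),
      (⨍ y in Metric.closedBall z r, ‖q y - q z‖) < |q z| / 16 :=
    hzleb'.eventually (eventually_lt_nhds (by positivity))
  have h2 : ∀ᶠ r in 𝓝[>] (0:ℝ), ENNReal.ofReal (3/4)
      < volume (Z ∩ Metric.closedBall z r) / volume (Metric.closedBall z r) :=
    hz.eventually (eventually_gt_nhds (by simp [ENNReal.ofReal_lt_one]; norm_num))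
  obtain ⟨r, ⟨h1r, h2r⟩, hr_pos⟩ := ((h1.and h2).and self_mem_nhdsWithin).exists
  replace hr_pos : (0:ℝ) < r := hr_pos
  -- find a point of Z in (z + r/2, z + r]
  have hz' : (Z ∩ Ioc (z + r/2) (z + r)).Nonempty := by
    rw [← Set.not_disjoint_iff_nonempty_inter]
    intro hdisj
    have hsub : Z ∩ Metric.closedBall z r ⊆ Metric.closedBall z r \ Ioc (z + r/2) (z + r) := by
      intro y hy
      exact ⟨hy.2, fun hy3 => (Set.disjoint_left.mp hdisj hy.1) hy3⟩
    have hIcc : Metric.closedBall z r = Icc (z - r) (z + r) := Real.closedBall_eq_Icc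
    have hsub2 : Ioc (z + r/2) (z + r) ⊆ Icc (z - r) (z + r) := by
      intro y hy
      exact ⟨by linarith [hy.1], hy.2⟩
    have hfin2 : volume (Ioc (z + r/2) (z + r)) ≠ ⊤ := by
      rw [Real.volume_Ioc]; exact ENNReal.ofReal_ne_top
    have hv1 : volume (Metric.closedBall z r \ Ioc (z + r/2) (z + r))
        = ENNReal.ofReal (3/2 * r) := by
      rw [hIcc, measure_diff hsub2 measurableSet_Ioc.nullMeasurableSet hfin2,
        Real.volume_Icc, Real.volume_Ioc, ← ENNReal.ofReal_sub _ (by linarith)]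
      congr 1; ring
    have hv2 : volume (Metric.closedBall z r) = ENNReal.ofReal (2 * r) := by
      rw [Real.volume_closedBall]
    have hle : volume (Z ∩ Metric.closedBall z r) / volume (Metric.closedBall z r)
        ≤ ENNReal.ofReal (3/2 * r) / ENNReal.ofReal (2 * r) := by
      calc volume (Z ∩ Metric.closedBall z r) / volume (Metric.closedBall z r)
          ≤ volume (Metric.closedBall z r \ Ioc (z + r/2) (z + r))
            / volume (Metric.closedBall z r) :=
            ENNReal.div_le_div_right (measure_mono hsub) _
        _ = ENNReal.ofReal (3/2 * r) / ENNReal.ofReal (2 * r) := by rw [hv1, hv2]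
    have heq : ENNReal.ofReal (3/2 * r) / ENNReal.ofReal (2 * r) = ENNReal.ofReal (3/4) := by
      rw [← ENNReal.ofReal_div_of_pos (by linarith)]
      congr 1
      field_simp
      ring
    rw [heq] at hle
    exact absurd (lt_of_lt_of_le h2r hle) (lt_irrefl _)
  obtain ⟨z', hz'Z, hz'mem⟩ := hz'
  have hzz' : z < z' := by have := hz'mem.1; linarith
  have hgz' : g z' = 0 := hz'Z
  have hdiff : ∫ y in Ioc z z', q y = 0 := by
    have h := intervalIntegral.integral_Iic_sub_Iic (μ := volume) (f := q) (a := z) (b := z')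
      hq.integrableOn hq.integrableOn
    rw [intervalIntegral.integral_of_le hzz'.le] at h
    rw [← h, ← hg z, ← hg z', hgz, hgz']
    ring
  have hIoc_cb : Ioc z z' ⊆ Metric.closedBall z r := by
    intro y hy
    have : y ∈ Icc (z - r) (z + r) := ⟨by linarith [hy.1.le], by linarith [hy.2, hz'mem.2]⟩
    rwa [Real.closedBall_eq_Icc]
  have hvol_cb : volume (Metric.closedBall z r) = ENNReal.ofReal (2 * r) := by
    rw [Real.volume_closedBall]
  have hint_cb : IntegrableOn (fun y => ‖q y - q z‖) (Metric.closedBall z r) := by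
    refine Integrable.abs ?_ |>.congr (ae_of_all _ fun y => (Real.norm_eq_abs _).symm)
    exact hq.integrableOn.sub (integrableOn_const (by rw [hvol_cb]; exact ENNReal.ofReal_ne_top))
  have key : |q z| * (z' - z) ≤ ∫ y in Metric.closedBall z r, ‖q y - q z‖ := by
    have hconst : IntegrableOn (fun _ : ℝ => q z) (Ioc z z') :=
      integrableOn_const (by rw [Real.volume_Ioc]; exact ENNReal.ofReal_ne_top)
    have e0 : ∫ y in Ioc z z', (q z - q y) = q z * (z' - z) := by
      rw [integral_sub hconst hq.integrableOn, hdiff, sub_zero, setIntegral_const,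
        measureReal_def, Real.volume_Ioc, ENNReal.toReal_ofReal (by linarith), smul_eq_mul, mul_comm]
    have e1 : |q z| * (z' - z) = |∫ y in Ioc z z', (q z - q y)| := by
      rw [e0, abs_mul, abs_of_nonneg (by linarith : (0:ℝ) ≤ z' - z)]
    rw [e1]
    calc |∫ y in Ioc z z', (q z - q y)| ≤ ∫ y in Ioc z z', ‖q z - q y‖ := by
          rw [← Real.norm_eq_abs]
          exact norm_integral_le_integral_norm _
      _ = ∫ y in Ioc z z', ‖q y - q z‖ := by
          refine setIntegral_congr_fun measurableSet_Ioc (fun y _ => ?_)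
          rw [norm_sub_rev]
      _ ≤ ∫ y in Metric.closedBall z r, ‖q y - q z‖ :=
          setIntegral_mono_set hint_cb (ae_of_all _ fun y => norm_nonneg _)
            (HasSubset.Subset.eventuallyLE hIoc_cb)
  have havg : (∫ y in Metric.closedBall z r, ‖q y - q z‖) < 2 * r * (|q z| / 16) := by
    have hA := setAverage_eq (μ := volume) (fun y => ‖q y - q z‖) (Metric.closedBall z r)
    rw [measureReal_def, hvol_cb, ENNReal.toReal_ofReal (by linarith), smul_eq_mul] at hA
    have h2r' : (0:ℝ) < 2 * r := by linarith
    have := h1r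
    rw [hA] at this
    calc (∫ y in Metric.closedBall z r, ‖q y - q z‖)
        = (2*r) * ((2*r)⁻¹ * ∫ y in Metric.closedBall z r, ‖q y - q z‖) := by
          field_simp
      _ < 2 * r * (|q z| / 16) := by
          exact mul_lt_mul_of_pos_left this h2r'
  nlinarith [hz'mem.1, key, havg, hqzpos, hr_pos]

lemma step2 {q g φ F : ℝ → ℝ} (hq_int : Integrable q)
    (hgc : Continuous g) (hφc : Continuous φ)
    (hFdef : ∀ x, F x = g x * deriv φ x + q x * φ x)
    (hFint : Integrable F)
    (parts : ∀ c d : ℝ, c ≤ d → (∀ x ∈ Icc c d, g x ≠ 0) →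
      ∫ t in Ioc c d, F t = g d * φ d - g c * φ c)
    (hq0 : ∀ᵐ x : ℝ, g x = 0 → q x = 0)
    {z₁ z₂ : ℝ} (hz12 : z₁ ≤ z₂) (hgz₁ : g z₁ = 0) (hgz₂ : g z₂ = 0) :
    ∫ y in Ioc z₁ z₂, F y = 0 := by
  set U : Set ℝ := g ⁻¹' ({0}ᶜ) with hU_def
  have hUmem : ∀ {x : ℝ}, x ∈ U ↔ g x ≠ 0 := fun {x} => Iff.rfl
  have hUo : IsOpen U := isOpen_compl_singleton.preimage hgc
  have hmeasU : MeasurableSet U := hUo.measurableSet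
  -- split the integral
  have hsplit : ∫ y in Ioc z₁ z₂, F y
      = (∫ y in U, F y ∂(volume.restrict (Ioc z₁ z₂)))
        + ∫ y in Uᶜ, F y ∂(volume.restrict (Ioc z₁ z₂)) :=
    (integral_add_compl hmeasU (hFint.restrict)).symm
  -- the part on Uᶜ vanishes
  have hcompl : ∫ y in Uᶜ, F y ∂(volume.restrict (Ioc z₁ z₂)) = 0 := by
    rw [Measure.restrict_restrict hmeasU.compl]
    have h1 : ∀ᵐ y : ℝ, y ∈ Uᶜ ∩ Ioc z₁ z₂ → F y = 0 := by
      filter_upwards [hq0] with y hy hymem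
      have hgy : g y = 0 := not_not.mp (fun hne => hymem.1 (hUmem.mpr hne))
      rw [hFdef, hgy, hy hgy]
      ring
    have h2 : ∀ᵐ y ∂(volume.restrict (Uᶜ ∩ Ioc z₁ z₂)), F y = 0 :=
      (ae_restrict_iff' (hmeasU.compl.inter measurableSet_Ioc)).mpr h1
    exact integral_eq_zero_of_ae h2
  -- the part on U : restrict to the open interval
  set V : Set ℝ := U ∩ Ioo z₁ z₂ with hV_def
  have hVo : IsOpen V := hUo.inter isOpen_Ioo
  have hUIoc : U ∩ Ioc z₁ z₂ = V := by
    ext y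
    simp only [hV_def, mem_inter_iff, mem_Ioc, mem_Ioo]
    constructor
    · rintro ⟨hy1, hy2, hy3⟩
      refine ⟨hy1, hy2, lt_of_le_of_ne hy3 ?_⟩
      rintro rfl
      exact (hUmem.mp hy1) hgz₂
    · rintro ⟨hy1, hy2, hy3⟩
      exact ⟨hy1, hy2, hy3.le⟩
  have hVzero : ∫ y in V, F y = 0 := by
    set C : {r : ℚ // (r : ℝ) ∈ V} → Set ℝ := fun i => connectedComponentIn V (i : ℝ) with hC_def
    set T : Set (Set ℝ) := Set.range C with hT_def
    have hTc : T.Countable := countable_range C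
    haveI : Countable ↥T := hTc.to_subtype
    have hTopen : ∀ t : ↥T, IsOpen (t : Set ℝ) := by
      rintro ⟨t, ⟨i, rfl⟩⟩
      exact hVo.connectedComponentIn
    have hTdisj : Pairwise (Function.onFun Disjoint fun t : ↥T => (t : Set ℝ)) := by
      rintro ⟨t1, ht1⟩ ⟨t2, ht2⟩ hne12
      rw [Function.onFun]
      by_contra hnd
      obtain ⟨y, hy1, hy2⟩ := Set.not_disjoint_iff.mp hnd
      obtain ⟨i1, rfl⟩ := ht1
      obtain ⟨i2, rfl⟩ := ht2
      have e1 := connectedComponentIn_eq hy1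
      have e2 := connectedComponentIn_eq hy2
      exact hne12 (Subtype.ext (e1.trans e2.symm))
    have hTunion : ⋃ t : ↥T, (t : Set ℝ) = V := by
      apply subset_antisymm
      · refine iUnion_subset fun t => ?_
        obtain ⟨t, ⟨i, rfl⟩⟩ := t
        exact connectedComponentIn_subset _ _
      · intro y hy
        have hccy : y ∈ connectedComponentIn V y := mem_connectedComponentIn hy
        obtain ⟨ε, hε, hball⟩ := Metric.isOpen_iff.mp hVo.connectedComponentIn y hccy
        obtain ⟨r, hr1, hr2⟩ := exists_rat_btwn (show y - ε < y + ε by linarith)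
        have hrV : (r : ℝ) ∈ connectedComponentIn V y := by
          apply hball
          rw [Real.ball_eq_Ioo]
          exact ⟨hr1, hr2⟩
        have hrV' : (r : ℝ) ∈ V := connectedComponentIn_subset _ _ hrV
        refine mem_iUnion.mpr ⟨⟨C ⟨r, hrV'⟩, ⟨⟨r, hrV'⟩, rfl⟩⟩, ?_⟩
        show y ∈ connectedComponentIn V (r : ℝ)
        rw [← connectedComponentIn_eq hrV]
        exact hccy
    have hsum : ∫ y in V, F y = ∑' t : ↥T, ∫ y in (t : Set ℝ), F y := by
      conv_lhs => rw [← hTunion]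
      exact integral_iUnion (fun t => (hTopen t).measurableSet) hTdisj hFint.integrableOn
    have hzero : ∀ t : ↥T, ∫ y in (t : Set ℝ), F y = 0 := by
      rintro ⟨t, ⟨⟨r, hrV⟩, rfl⟩⟩
      show ∫ y in connectedComponentIn V (r : ℝ), F y = 0
      set t := connectedComponentIn V (r : ℝ) with ht_def
      have htV : t ⊆ V := connectedComponentIn_subset _ _
      have hrt : (r : ℝ) ∈ t := mem_connectedComponentIn hrV
      have hto : IsOpen t := hVo.connectedComponentIn
      have htconn : IsPreconnected t := isPreconnected_connectedComponentIn
      have htne' : t.Nonempty := ⟨r, hrt⟩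
      have htIoo12 : t ⊆ Ioo z₁ z₂ := htV.trans inter_subset_right
      have hbddb : BddBelow t := ⟨z₁, fun y hy => (htIoo12 hy).1.le⟩
      have hbdda : BddAbove t := ⟨z₂, fun y hy => (htIoo12 hy).2.le⟩
      set a := sInf t with ha_def
      set b := sSup t with hb_def
      have hat : a ∉ t := by
        intro hat
        obtain ⟨ε, hε, hball⟩ := Metric.isOpen_iff.mp hto a hat
        have h1 : a - ε/2 ∈ t := by
          apply hball
          rw [Real.ball_eq_Ioo]
          constructor <;> linarith
        have := csInf_le hbddb h1
        linarith
      have hbt : b ∉ t := by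
        intro hbt
        obtain ⟨ε, hε, hball⟩ := Metric.isOpen_iff.mp hto b hbt
        have h1 : b + ε/2 ∈ t := by
          apply hball
          rw [Real.ball_eq_Ioo]
          constructor <;> linarith
        have := le_csSup hbdda h1
        linarith
      have htIoo : t = Ioo a b := by
        apply subset_antisymm
        · intro y hy
          have h1 : a ≤ y := csInf_le hbddb hy
          have h2 : y ≤ b := le_csSup hbdda hy
          exact ⟨lt_of_le_of_ne h1 (fun he => hat (he ▸ hy)),
            lt_of_le_of_ne h2 (fun he => hbt (he ▸ hy))⟩
        · intro y hy
          obtain ⟨u, hu, hu2⟩ := (csInf_lt_iff hbddb htne').mp hy.1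
          obtain ⟨v, hv, hv2⟩ := (lt_csSup_iff hbdda htne').mp hy.2
          exact htconn.ordConnected.out hu hv ⟨hu2.le, hv2.le⟩
      have hab : a < b := by
        obtain ⟨y, hy⟩ := htne'
        rw [htIoo] at hy
        linarith [hy.1, hy.2]
      have haz : z₁ ≤ a := le_csInf htne' (fun y hy => (htIoo12 hy).1.le)
      have hbz : b ≤ z₂ := csSup_le htne' (fun y hy => (htIoo12 hy).2.le)
      -- boundary values vanish
      have hga : g a = 0 := by
        by_contra hga
        have haz' : z₁ < a := by
          rcases eq_or_lt_of_le haz with he | hlt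
          · exact absurd (he ▸ hgz₁) hga
          · exact hlt
        have haV : a ∈ V := ⟨hUmem.mpr hga, haz', lt_of_lt_of_le hab hbz⟩
        obtain ⟨ε, hε, hball⟩ := Metric.isOpen_iff.mp hVo a haV
        set y := min (a + ε/2) ((a + b)/2) with hy_def
        have hy1 : a < y := lt_min (by linarith) (by linarith)
        have hy2 : y < b := lt_of_le_of_lt (min_le_right _ _) (by linarith)
        have hyt : y ∈ t := by rw [htIoo]; exact ⟨hy1, hy2⟩
        have hIccV : Icc a y ⊆ V := by
          intro x hx
          rcases eq_or_lt_of_le hx.1 with he | hlt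
          · rwa [← he]
          · refine htV ?_
            rw [htIoo]
            exact ⟨hlt, lt_of_le_of_lt hx.2 hy2⟩
        have hsub2 : Icc a y ⊆ connectedComponentIn V y :=
          isPreconnected_Icc.subset_connectedComponentIn ⟨hy1.le, le_rfl⟩ hIccV
        have h3 : a ∈ connectedComponentIn V y := hsub2 (left_mem_Icc.mpr hy1.le)
        have h4 : a ∈ t := by
          rw [ht_def, connectedComponentIn_eq hyt]
          exact h3
        rw [htIoo] at h4
        exact lt_irrefl a h4.1
      have hgb : g b = 0 := by
        by_contra hgb
        have hbz' : b < z₂ := by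
          rcases eq_or_lt_of_le hbz with he | hlt
          · exact absurd (he ▸ hgz₂) hgb
          · exact hlt
        have hbV : b ∈ V := ⟨hUmem.mpr hgb, lt_of_le_of_lt haz hab, hbz'⟩
        obtain ⟨ε, hε, hball⟩ := Metric.isOpen_iff.mp hVo b hbV
        set y := max (b - ε/2) ((a + b)/2) with hy_def
        have hy1 : y < b := max_lt (by linarith) (by linarith)
        have hy2 : a < y := lt_of_lt_of_le (by linarith) (le_max_right _ _)
        have hyt : y ∈ t := by rw [htIoo]; exact ⟨hy2, hy1⟩
        have hIccV : Icc y b ⊆ V := by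
          intro x hx
          rcases eq_or_lt_of_le hx.2 with he | hlt
          · rwa [he]
          · refine htV ?_
            rw [htIoo]
            exact ⟨lt_of_lt_of_le hy2 hx.1, hlt⟩
        have hsub2 : Icc y b ⊆ connectedComponentIn V y :=
          isPreconnected_Icc.subset_connectedComponentIn ⟨le_rfl, hy1.le⟩ hIccV
        have h3 : b ∈ connectedComponentIn V y := hsub2 (right_mem_Icc.mpr hy1.le)
        have h4 : b ∈ t := by
          rw [ht_def, connectedComponentIn_eq hyt]
          exact h3
        rw [htIoo] at h4
        exact lt_irrefl b h4.2
      -- exhaust (a,b) by closed intervals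
      rw [htIoo]
      set cc : ℕ → ℝ := fun n => a + (b - a)/(n + 2) with hcc_def
      set dd : ℕ → ℝ := fun n => b - (b - a)/(n + 2) with hdd_def
      have hfrac : ∀ n : ℕ, 0 < (b - a)/((n:ℝ) + 2) ∧ (b - a)/((n:ℝ) + 2) ≤ (b - a)/2 := by
        intro n
        constructor
        · have : (0:ℝ) < (n:ℝ) + 2 := by positivity
          apply div_pos (by linarith) this
        · apply div_le_div_of_nonneg_left (by linarith) (by norm_num)
          have : (0:ℝ) ≤ (n:ℝ) := Nat.cast_nonneg n
          linarith
      have hccdd : ∀ n, cc n ≤ dd n := by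
        intro n
        have := (hfrac n).2
        simp only [hcc_def, hdd_def]
        linarith
      have hac : ∀ n, a < cc n := by
        intro n
        have := (hfrac n).1
        simp only [hcc_def]
        linarith
      have hdb : ∀ n, dd n < b := by
        intro n
        have := (hfrac n).1
        simp only [hdd_def]
        linarith
      have hfrac_anti : ∀ m n : ℕ, m ≤ n → (b - a)/((n:ℝ) + 2) ≤ (b - a)/((m:ℝ) + 2) := by
        intro m n hmn
        apply div_le_div_of_nonneg_left (by linarith) (by positivity)
        have : (m:ℝ) ≤ (n:ℝ) := Nat.cast_le.mpr hmn
        linarith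
      have hmono : Monotone (fun n => Ioc (cc n) (dd n)) := by
        intro m n hmn
        apply Ioc_subset_Ioc
        · simp only [hcc_def]
          linarith [hfrac_anti m n hmn]
        · simp only [hdd_def]
          linarith [hfrac_anti m n hmn]
      have hunion : ⋃ n, Ioc (cc n) (dd n) = Ioo a b := by
        apply subset_antisymm
        · refine iUnion_subset fun n => ?_
          intro y hy
          exact ⟨lt_trans (hac n) hy.1, lt_of_le_of_lt hy.2 (hdb n)⟩
        · intro y hy
          have hδ : 0 < min (y - a) (b - y) := lt_min (by linarith [hy.1]) (by linarith [hy.2])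
          obtain ⟨n, hn⟩ := exists_nat_gt ((b - a)/min (y - a) (b - y))
          have h1 : (b - a)/((n:ℝ) + 2) < min (y - a) (b - y) := by
            rw [div_lt_iff₀ (by positivity)]
            rw [div_lt_iff₀ hδ] at hn
            nlinarith [hδ]
          refine mem_iUnion.mpr ⟨n, ?_, ?_⟩
          · have := min_le_left (y - a) (b - y)
            simp only [hcc_def]
            linarith
          · have := min_le_right (y - a) (b - y)
            simp only [hdd_def]
            linarith
      have hlim := MeasureTheory.tendsto_setIntegral_of_monotone
        (fun n : ℕ => measurableSet_Ioc) hmono hFint.integrableOn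
      rw [hunion] at hlim
      have hterm : ∀ n, ∫ y in Ioc (cc n) (dd n), F y
          = g (dd n) * φ (dd n) - g (cc n) * φ (cc n) := by
        intro n
        refine parts (cc n) (dd n) (hccdd n) (fun x hx => ?_)
        have hxI : x ∈ Ioo a b := ⟨lt_of_lt_of_le (hac n) hx.1, lt_of_le_of_lt hx.2 (hdb n)⟩
        have hxV : x ∈ V := htV (htIoo ▸ hxI)
        exact hUmem.mp hxV.1
      have hcc_lim : Tendsto cc atTop (𝓝 a) := by
        have h0 : Tendsto (fun n : ℕ => (b - a)/((n:ℝ) + 2)) atTop (𝓝 0) := by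
          have h1 : Tendsto (fun n : ℕ => (n:ℝ) + 2) atTop atTop :=
            tendsto_atTop_add_const_right atTop 2 tendsto_natCast_atTop_atTop
          simpa [div_eq_mul_inv] using h1.inv_tendsto_atTop.const_mul (b - a)
        have := h0.const_add a
        simpa using this
      have hdd_lim : Tendsto dd atTop (𝓝 b) := by
        have h0 : Tendsto (fun n : ℕ => (b - a)/((n:ℝ) + 2)) atTop (𝓝 0) := by
          have h1 : Tendsto (fun n : ℕ => (n:ℝ) + 2) atTop atTop :=
            tendsto_atTop_add_const_right atTop 2 tendsto_natCast_atTop_atTop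
          simpa [div_eq_mul_inv] using h1.inv_tendsto_atTop.const_mul (b - a)
        have := (h0.const_mul (-1)).const_add b
        simp only [mul_zero, add_zero] at this
        convert this using 2 with n
        simp only [hdd_def]
        ring
      have hRHS : Tendsto (fun n => g (dd n) * φ (dd n) - g (cc n) * φ (cc n)) atTop
          (𝓝 (g b * φ b - g a * φ a)) :=
        ((((hgc.mul hφc).tendsto b).comp hdd_lim).sub (((hgc.mul hφc).tendsto a).comp hcc_lim))
      have heval : ∫ y in Ioo a b, F y = g b * φ b - g a * φ a := by
        refine tendsto_nhds_unique hlim ?_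
        refine hRHS.congr fun n => ?_
        exact (hterm n).symm
      rw [heval, hga, hgb]
      ring
    rw [hsum]
    rw [tsum_congr hzero]
    exact tsum_zero
  rw [hsplit, hcompl, Measure.restrict_restrict hmeasU, hUIoc, hVzero, add_zero]

/-- Stein-type integration by parts: with `τ∘h (x) = p(x)⁻¹ ∫_{-∞}^x (E[h(X)] - h(y)) p(y) dy`,
for any differentiable `φ` with `E[|(τ∘h)(X) φ'(X)|] < ∞`, we have
`E[(τ∘h)(X) φ'(X)] = E[(h(X) - E[h(X)]) φ(X)]`. -/
theorem stein_identity
    (p : ℝ → ℝ) (hp_nonneg : ∀ x, 0 ≤ p x) (hp_pos : ∀ x, 0 < p x)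
    (hp_int : Integrable p) (hp_one : ∫ x, p x = 1)
    (h : ℝ → ℝ) (hh_int : Integrable (fun x => h x * p x))
    (μh : ℝ) (hμh : μh = ∫ x, h x * p x)
    (τh : ℝ → ℝ)
    (hτh : ∀ x, τh x = (p x)⁻¹ * ∫ y in Iic x, (μh - h y) * p y)
    (φ : ℝ → ℝ) (hφ : Differentiable ℝ φ)
    (h_int : Integrable (fun x => τh x * deriv φ x * p x))
    (h_int' : Integrable (fun x => (h x - μh) * φ x * p x)) :
    ∫ x, τh x * deriv φ x * p x = ∫ x, (h x - μh) * φ x * p x := by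
  classical
  set q : ℝ → ℝ := fun x => (μh - h x) * p x with hq_def
  have hq_int : Integrable q := by
    have he : q = fun x => μh * p x - h x * p x := by
      funext x; simp only [hq_def]; ring
    rw [he]
    exact (hp_int.const_mul μh).sub hh_int
  have hq_tot : ∫ x, q x = 0 := by
    have he : q = fun x => μh * p x - h x * p x := by
      funext x; simp only [hq_def]; ring
    rw [he, integral_sub (hp_int.const_mul μh) hh_int, MeasureTheory.integral_const_mul,
      hp_one, ← hμh]
    ring
  set g : ℝ → ℝ := fun x => ∫ y in Iic x, q y with hg_def
  have hgq : ∀ x, g x = ∫ y in Iic x, q y := fun x => rfl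
  set F : ℝ → ℝ := fun x => g x * deriv φ x + q x * φ x with hF_def
  have hFdef : ∀ x, F x = g x * deriv φ x + q x * φ x := fun x => rfl
  have hφc : Continuous φ := hφ.continuous
  -- rewriting the integrands
  have heτ : (fun x => τh x * deriv φ x * p x) = fun x => g x * deriv φ x := by
    funext x
    rw [hτh x]
    have hpx : p x ≠ 0 := (hp_pos x).ne'
    have : (∫ y in Iic x, (μh - h y) * p y) = g x := rfl
    rw [this]
    field_simp
  have heq' : (fun x => q x * φ x) = fun x => -((h x - μh) * φ x * p x) := by
    funext x; simp only [hq_def]; ring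
  have hGφ' : Integrable (fun x => g x * deriv φ x) := heτ ▸ h_int
  have hQφ : Integrable (fun x => q x * φ x) := by rw [heq']; exact h_int'.neg
  have hFint : Integrable F := hGφ'.add hQφ
  -- goal reduction
  suffices hI : ∫ x, F x = 0 by
    have e1 : ∫ x, F x = (∫ x, g x * deriv φ x) + ∫ x, q x * φ x := integral_add hGφ' hQφ
    have e2 : ∫ x, q x * φ x = -∫ x, (h x - μh) * φ x * p x := by
      rw [heq', integral_neg]
    have e3 : ∫ x, τh x * deriv φ x * p x = ∫ x, g x * deriv φ x := by rw [heτ]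
    rw [e3]
    rw [e1, e2] at hI
    linarith
  -- continuity
  have hgc : Continuous g := by
    have h1 : ∀ x : ℝ, g x = (∫ y in Iic 0, q y) + ∫ y in (0:ℝ)..x, q y := by
      intro x
      have := intervalIntegral.integral_Iic_sub_Iic (μ := volume) (f := q) (a := 0) (b := x)
        hq_int.integrableOn hq_int.integrableOn
      rw [hgq]
      linarith
    rw [show g = fun x => (∫ y in Iic 0, q y) + ∫ y in (0:ℝ)..x, q y from funext h1]
    exact continuous_const.add
      (intervalIntegral.continuous_primitive (fun a b => hq_int.intervalIntegrable) 0)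
  set S : ℝ → ℝ := fun x => ∫ y in Iic x, F y with hS_def
  have hSc : Continuous S := by
    have h1 : ∀ x : ℝ, S x = (∫ y in Iic 0, F y) + ∫ y in (0:ℝ)..x, F y := by
      intro x
      have := intervalIntegral.integral_Iic_sub_Iic (μ := volume) (f := F) (a := 0) (b := x)
        hFint.integrableOn hFint.integrableOn
      simp only [hS_def]
      linarith
    rw [show S = fun x => (∫ y in Iic 0, F y) + ∫ y in (0:ℝ)..x, F y from funext h1]
    exact continuous_const.add
      (intervalIntegral.continuous_primitive (fun a b => hFint.intervalIntegrable) 0)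
  have hSdiff : ∀ {a b : ℝ}, a ≤ b → S b - S a = ∫ y in Ioc a b, F y := by
    intro a b hab
    have h1 := intervalIntegral.integral_Iic_sub_Iic (μ := volume) (f := F) (a := a) (b := b)
      hFint.integrableOn hFint.integrableOn
    rw [intervalIntegral.integral_of_le hab] at h1
    exact h1
  have hS_top : Tendsto S atTop (𝓝 (∫ x, F x)) := tendsto_setIntegral_Iic_atTop hFint
  have hS_bot : Tendsto S atBot (𝓝 0) := tendsto_setIntegral_Iic_atBot hFint
  have hg_Ioi : ∀ x, g x = ∫ y in Ioi x, -q y := by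
    intro x
    have h1 := intervalIntegral.integral_Iic_add_Ioi (μ := volume) (f := q) (b := x)
      hq_int.integrableOn hq_int.integrableOn
    rw [hq_tot] at h1
    rw [integral_neg, hgq]
    linarith
  have hφd : ∀ x : ℝ, HasDerivAt φ (deriv φ x) x := fun x => (hφ x).hasDerivAt
  -- the parts formula
  have parts : ∀ c d : ℝ, c ≤ d → (∀ x ∈ Icc c d, g x ≠ 0) →
      ∫ t in Ioc c d, F t = g d * φ d - g c * φ c := by
    intro c d hcd hne
    obtain ⟨x₀, hx₀mem, hx₀min⟩ := (isCompact_Icc (a := c) (b := d)).exists_isMinOn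
      ⟨c, left_mem_Icc.mpr hcd⟩ (hgc.abs.continuousOn)
    have hε : 0 < |g x₀| := abs_pos.mpr (hne _ hx₀mem)
    have hφ'int : IntegrableOn (deriv φ) (Ioc c d) := by
      have hb : IntegrableOn (fun x => |g x₀|⁻¹ * |g x * deriv φ x|) (Ioc c d) :=
        (hGφ'.abs.const_mul _).integrableOn
      refine Integrable.mono' hb ((measurable_deriv φ).aestronglyMeasurable) ?_
      refine (ae_restrict_iff' measurableSet_Ioc).mpr (ae_of_all _ fun y hy => ?_)
      have hymem : y ∈ Icc c d := ⟨hy.1.le, hy.2⟩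
      have h1 : |g x₀| ≤ |g y| := hx₀min hymem
      have h2 : 1 ≤ |g x₀|⁻¹ * |g y| := by
        rw [inv_mul_eq_div, le_div_iff₀ hε]
        linarith
      rw [Real.norm_eq_abs, abs_mul]
      calc |deriv φ y| = 1 * |deriv φ y| := (one_mul _).symm
        _ ≤ (|g x₀|⁻¹ * |g y|) * |deriv φ y| :=
            mul_le_mul_of_nonneg_right h2 (abs_nonneg _)
        _ = |g x₀|⁻¹ * (|g y| * |deriv φ y|) := by ring
    have hGhyp : ∀ t ∈ Icc c d, g t = g c + ∫ x in Ioc c t, q x := by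
      intro t ht
      have h1 := intervalIntegral.integral_Iic_sub_Iic (μ := volume) (f := q) (a := c) (b := t)
        hq_int.integrableOn hq_int.integrableOn
      rw [intervalIntegral.integral_of_le ht.1] at h1
      rw [hgq t, hgq c]
      linarith
    have hΦhyp : ∀ t ∈ Icc c d, φ t = φ c + ∫ x in Ioc c t, deriv φ x := by
      intro t ht
      have hii : IntervalIntegrable (deriv φ) volume c t := by
        rw [intervalIntegrable_iff_integrableOn_Ioc_of_le ht.1]
        exact hφ'int.mono_set (Ioc_subset_Ioc le_rfl ht.2)
      have h1 := intervalIntegral.integral_eq_sub_of_hasDerivAt (fun x _ => hφd x) hii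
      rw [intervalIntegral.integral_of_le ht.1] at h1
      linarith
    exact parts_on_Ioc hcd hq_int.integrableOn hφ'int hGφ'.integrableOn hQφ.integrableOn
      hGhyp hΦhyp
  -- key3 : identify the total integral from the right
  have key3 : ∀ A : ℝ, (∀ x, A < x → g x ≠ 0) → ∀ c, A < c → ∫ x, F x = S c - g c * φ c := by
    intro A hA c hc
    have hgφeq : ∀ d, c ≤ d → g d * φ d = S d - S c + g c * φ c := by
      intro d hd
      have hne : ∀ x ∈ Icc c d, g x ≠ 0 := fun x hx => hA x (lt_of_lt_of_le hc hx.1)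
      have h1 := parts c d hd hne
      have h2 := hSdiff hd
      linarith
    have hTend : Tendsto (fun d => g d * φ d) atTop (𝓝 ((∫ x, F x) - S c + g c * φ c)) := by
      have h1 : Tendsto (fun d => S d - S c + g c * φ c) atTop
          (𝓝 ((∫ x, F x) - S c + g c * φ c)) := (hS_top.sub_const _).add_const _
      refine h1.congr' ?_
      filter_upwards [eventually_ge_atTop c] with d hd
      exact (hgφeq d hd).symm
    have hwΦ : Integrable (fun x => -q x * φ x) := by
      have he : (fun x => -q x * φ x) = fun x => -(q x * φ x) := by funext x; ring
      rw [he]; exact hQφ.neg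
    have hL0 := limit_zero_atTop hq_int.neg hwΦ hA hg_Ioi hTend
    linarith
  -- key4 : identify S from the left
  have key4 : ∀ B : ℝ, (∀ x, x < B → g x ≠ 0) → ∀ c, c < B → S c = g c * φ c := by
    intro B hB c hc
    have hgφeq : ∀ x, x ≤ c → g x * φ x = g c * φ c - S c + S x := by
      intro x hx
      have hne : ∀ y ∈ Icc x c, g y ≠ 0 := fun y hy => hB y (lt_of_le_of_lt hy.2 hc)
      have h1 := parts x c hx hne
      have h2 := hSdiff hx
      linarith
    have hTend : Tendsto (fun x => g x * φ x) atBot (𝓝 (g c * φ c - S c)) := by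
      have h1 : Tendsto (fun x => g c * φ c - S c + S x) atBot
          (𝓝 (g c * φ c - S c + 0)) := tendsto_const_nhds.add hS_bot
      rw [add_zero] at h1
      refine h1.congr' ?_
      filter_upwards [eventually_le_atBot c] with x hx
      exact (hgφeq x hx).symm
    have hL0 := limit_zero_atBot hq_int hQφ hB hgq hTend
    linarith
  -- a.e. vanishing of q on the zero set of g
  have hq0 := ae_eq_zero_on_zero_set hq_int hgq
  have hStep2 : ∀ z₁ z₂ : ℝ, z₁ ≤ z₂ → g z₁ = 0 → g z₂ = 0 → S z₂ = S z₁ := by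
    intro z₁ z₂ hz12 h1 h2
    have h3 := step2 hq_int hgc hφc hFdef hFint parts hq0 hz12 h1 h2
    have h4 := hSdiff hz12
    linarith
  -- final case analysis
  set Z : Set ℝ := {x : ℝ | g x = 0} with hZ_def
  have hZc : IsClosed Z := isClosed_eq hgc continuous_const
  by_cases hZne : Z.Nonempty
  · -- step A : ∫ F = S z0 for some z0 ∈ Z
    have hIZ : ∃ z0 ∈ Z, ∫ x, F x = S z0 := by
      by_cases hbdd : BddAbove Z
      · have hA : sSup Z ∈ Z := hZc.csSup_mem hZne hbdd
        refine ⟨sSup Z, hA, ?_⟩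
        have hne : ∀ x, sSup Z < x → g x ≠ 0 := by
          intro x hx hgx
          exact absurd (le_csSup hbdd (hgx : x ∈ Z)) (not_le.mpr hx)
        have heq : ∀ᶠ c in 𝓝[>] (sSup Z), (fun c => S c - g c * φ c) c = ∫ x, F x := by
          filter_upwards [self_mem_nhdsWithin] with c hc
          exact (key3 (sSup Z) hne c hc).symm
        have hlim : Tendsto (fun c => S c - g c * φ c) (𝓝[>] (sSup Z))
            (𝓝 (S (sSup Z) - g (sSup Z) * φ (sSup Z))) :=
          ((hSc.tendsto _).sub ((hgc.mul hφc).tendsto _)).mono_left nhdsWithin_le_nhds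
        have hlim2 : Tendsto (fun c => S c - g c * φ c) (𝓝[>] (sSup Z)) (𝓝 (∫ x, F x)) :=
          tendsto_const_nhds.congr' (heq.mono fun c hc => hc.symm)
        have huniq := tendsto_nhds_unique hlim hlim2
        have hgA : g (sSup Z) = 0 := hA
        rw [hgA, zero_mul, sub_zero] at huniq
        exact huniq.symm
      · obtain ⟨z0, hz0⟩ := hZne
        refine ⟨z0, hz0, ?_⟩
        have hseq : ∀ n : ℕ, ∃ z, z ∈ Z ∧ (n:ℝ) ≤ z := by
          intro n
          by_contra hcon
          push_neg at hcon
          exact hbdd ⟨n, fun z hz => (hcon z hz).le⟩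
        choose zs hzsZ hzsge using hseq
        have hzs_top : Tendsto zs atTop atTop :=
          tendsto_atTop_mono hzsge tendsto_natCast_atTop_atTop
        have h1 : Tendsto (fun n => S (zs n)) atTop (𝓝 (∫ x, F x)) := hS_top.comp hzs_top
        have h2 : ∀ n, S (zs n) = S z0 := by
          intro n
          rcases le_total z0 (zs n) with hle | hle
          · exact hStep2 z0 (zs n) hle hz0 (hzsZ n)
          · exact (hStep2 (zs n) z0 hle (hzsZ n) hz0).symm
        rw [show (fun n => S (zs n)) = fun _ => S z0 from funext h2] at h1
        exact tendsto_nhds_unique h1 tendsto_const_nhds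
    obtain ⟨z0, hz0Z, hIz0⟩ := hIZ
    -- step B : S z = 0 on Z
    have hSz0 : S z0 = 0 := by
      by_cases hbddb : BddBelow Z
      · have hB : sInf Z ∈ Z := hZc.csInf_mem hZne hbddb
        have hne : ∀ x, x < sInf Z → g x ≠ 0 := by
          intro x hx hgx
          exact absurd (csInf_le hbddb (hgx : x ∈ Z)) (not_le.mpr hx)
        have heq : ∀ᶠ c in 𝓝[<] (sInf Z), S c = g c * φ c := by
          filter_upwards [self_mem_nhdsWithin] with c hc
          exact key4 (sInf Z) hne c hc
        have hlim1 : Tendsto S (𝓝[<] (sInf Z)) (𝓝 (S (sInf Z))) :=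
          (hSc.tendsto _).mono_left nhdsWithin_le_nhds
        have hlim2 : Tendsto (fun c => g c * φ c) (𝓝[<] (sInf Z))
            (𝓝 (g (sInf Z) * φ (sInf Z))) :=
          ((hgc.mul hφc).tendsto _).mono_left nhdsWithin_le_nhds
        have huniq : S (sInf Z) = g (sInf Z) * φ (sInf Z) :=
          tendsto_nhds_unique (hlim1.congr' heq) hlim2
        have hgB : g (sInf Z) = 0 := hB
        rw [hgB, zero_mul] at huniq
        have := hStep2 (sInf Z) z0 (csInf_le hbddb hz0Z) hB hz0Z
        rw [this, huniq]
      · have hseq : ∀ n : ℕ, ∃ z, z ∈ Z ∧ z ≤ -(n:ℝ) := by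
          intro n
          by_contra hcon
          push_neg at hcon
          exact hbddb ⟨-(n:ℝ), fun z hz => (hcon z hz).le⟩
        choose zs hzsZ hzsle using hseq
        have hzs_bot : Tendsto zs atTop atBot := by
          refine tendsto_atBot_mono hzsle ?_
          exact tendsto_neg_atBot_iff.mpr tendsto_natCast_atTop_atTop
        have h1 : Tendsto (fun n => S (zs n)) atTop (𝓝 0) := hS_bot.comp hzs_bot
        have h2 : ∀ n, S (zs n) = S z0 := by
          intro n
          rcases le_total z0 (zs n) with hle | hle
          · exact hStep2 z0 (zs n) hle hz0Z (hzsZ n)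
          · exact (hStep2 (zs n) z0 hle (hzsZ n) hz0Z).symm
        rw [show (fun n => S (zs n)) = fun _ => S z0 from funext h2] at h1
        exact tendsto_nhds_unique (tendsto_const_nhds) h1
    rw [hIz0, hSz0]
  · -- Z is empty : g never vanishes
    have hne : ∀ x : ℝ, g x ≠ 0 := fun x hx => hZne ⟨x, hx⟩
    have h1 := key3 0 (fun x _ => hne x) 1 one_pos
    have h2 := key4 2 (fun x _ => hne x) 1 (by norm_num)
    linarith
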